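/- (Differential ghost, analytic core) Let γ : [0,T] → ℝⁿ be a differentiable solution of ẋ = e(x), and let f : ℝⁿ × ℝᵐ → ℝᵐ be such that y ↦ f(x,y) is globally Lipschitz (uniformly in x along γ) and (t,y) ↦ f(γ(t),y) is continuous. Then for any initial value r ∈ ℝᵐ there exists a differentiable ψ : [0,T] → ℝᵐ with ψ(0) = r and ψ'(t) = f(γ(t), ψ(t)) for all t ∈ [0,T], so that (γ, ψ) is a solution of the augmented system ẋ = e(x), ẏ = f(x,y) on [0,T] with the same duration T. -/

import Mathlib

open Set MeasureTheory intervalIntegral Function Nat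

section GlobalPicard

variable {E : Type*} [NormedAddCommGroup E] [NormedSpace ℝ E] [CompleteSpace E]

/-- Global Picard–Lindelöf: a time-dependent vector field that is globally Lipschitz in the
space variable (uniformly in time) and jointly continuous admits a solution on any compact
interval. -/
theorem global_picard {a b : ℝ} (hab : a ≤ b) {t₀ : ℝ} (ht₀ : t₀ ∈ Icc a b)
    (v : ℝ → E → E) (K : NNReal)
    (hlipv : ∀ t, LipschitzWith K (v t))
    (hcv : Continuous fun p : ℝ × E => v p.1 p.2) (x₀ : E) :
    ∃ f : ℝ → E, f t₀ = x₀ ∧ ∀ t ∈ Icc a b, HasDerivWithinAt f (v t (f t)) (Icc a b) t := by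
  have hne : Nonempty (Icc a b) := ⟨⟨t₀, ht₀⟩⟩
  set proj : ℝ → Icc a b := fun t => Set.projIcc a b hab t with hprojdef
  have hproj_cont : Continuous proj := continuous_projIcc
  have hproj_mem : ∀ t ∈ Icc a b, (proj t : ℝ) = t := fun t ht => by
    simp [hprojdef, projIcc_of_mem hab ht]
  -- composed vector field along a curve
  set vC : C(Icc a b, E) → ℝ → E := fun γ τ => v τ (γ (proj τ)) with hvCdef
  have hvC_cont : ∀ γ : C(Icc a b, E), Continuous (vC γ) := fun γ =>
    hcv.comp (continuous_id.prodMk (γ.continuous.comp hproj_cont))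
  have hvC_int : ∀ (γ : C(Icc a b, E)) (t₁ t₂ : ℝ),
      IntervalIntegrable (vC γ) volume t₁ t₂ := fun γ t₁ t₂ =>
    (hvC_cont γ).intervalIntegrable _ _
  -- the Picard operator
  set next : C(Icc a b, E) → C(Icc a b, E) := fun γ =>
    ⟨fun t => x₀ + ∫ τ in t₀..(t : ℝ), vC γ τ,
      (continuous_const.add ((intervalIntegral.continuous_primitive (hvC_int γ) t₀))).comp
        continuous_subtype_val⟩ with hnextdef
  have next_apply : ∀ (γ : C(Icc a b, E)) (t : Icc a b),
      next γ t = x₀ + ∫ τ in t₀..(t : ℝ), vC γ τ := fun γ t => rfl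
  -- key iterated estimate
  have key : ∀ (n : ℕ) (γ₁ γ₂ : C(Icc a b, E)) (t : Icc a b),
      dist (next^[n] γ₁ t) (next^[n] γ₂ t) ≤
        (K * |(t : ℝ) - t₀|) ^ n / n ! * dist γ₁ γ₂ := by
    intro n γ₁ γ₂
    induction n with
    | zero =>
      intro t
      simpa using ContinuousMap.dist_apply_le_dist t
    | succ n ih =>
      intro t
      rw [iterate_succ_apply', iterate_succ_apply']
      set g₁ := next^[n] γ₁
      set g₂ := next^[n] γ₂
      have hsub : uIcc t₀ (t : ℝ) ⊆ Icc a b := uIcc_subset_Icc ht₀ t.2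
      rw [dist_eq_norm, next_apply, next_apply, add_sub_add_left_eq_sub,
        ← intervalIntegral.integral_sub (hvC_int _ _ _) (hvC_int _ _ _),
        intervalIntegral.norm_integral_eq_norm_integral_uIoc]
      calc
        ‖∫ τ in Set.uIoc t₀ (t : ℝ), vC g₁ τ - vC g₂ τ‖ ≤
            ∫ τ in Set.uIoc t₀ (t : ℝ), (K : ℝ) * ((K * |τ - t₀|) ^ n / n ! * dist γ₁ γ₂) := by
          refine norm_integral_le_of_norm_le (Continuous.integrableOn_uIoc (by fun_prop)) ?_
          refine (ae_restrict_mem measurableSet_Ioc).mono fun τ hτ => ?_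
          have hτmem : τ ∈ Icc a b := hsub (Ioc_subset_Icc_self hτ)
          have h1 : ‖vC g₁ τ - vC g₂ τ‖ ≤ (K : ℝ) * dist (g₁ (proj τ)) (g₂ (proj τ)) := by
            rw [← dist_eq_norm]
            exact (hlipv τ).dist_le_mul _ _
          refine h1.trans ?_
          have h2 := ih (proj τ)
          rw [hproj_mem τ hτmem] at h2
          exact mul_le_mul_of_nonneg_left h2 (NNReal.coe_nonneg K)
        _ = (K * |(t : ℝ) - t₀|) ^ (n + 1) / (n + 1)! * dist γ₁ γ₂ := by
          simp_rw [mul_pow, div_eq_mul_inv, mul_assoc, MeasureTheory.integral_const_mul,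
            MeasureTheory.integral_mul_const, integral_pow_abs_sub_uIoc, div_eq_mul_inv,
            pow_succ' (K : ℝ), Nat.factorial_succ, Nat.cast_mul, Nat.cast_succ, mul_inv,
            mul_assoc]
  -- sup-metric estimate
  have key' : ∀ (n : ℕ) (γ₁ γ₂ : C(Icc a b, E)),
      dist (next^[n] γ₁) (next^[n] γ₂) ≤ (K * (b - a)) ^ n / n ! * dist γ₁ γ₂ := by
    intro n γ₁ γ₂
    rw [ContinuousMap.dist_le_iff_of_nonempty]
    intro t
    refine (key n γ₁ γ₂ t).trans ?_
    have h1 : |(t : ℝ) - t₀| ≤ b - a := by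
      rw [abs_sub_le_iff]
      constructor <;> linarith [t.2.1, t.2.2, ht₀.1, ht₀.2]
    gcongr
  -- a contracting iterate
  obtain ⟨N, hN⟩ : ∃ N : ℕ, (K * (b - a)) ^ N / N ! < 1 :=
    ((FloorSemiring.tendsto_pow_div_factorial_atTop ((K : ℝ) * (b - a))).eventually
      (gt_mem_nhds zero_lt_one)).exists
  have hKb : (0 : ℝ) ≤ (K * (b - a)) ^ N / N ! :=
    div_nonneg (pow_nonneg (mul_nonneg (NNReal.coe_nonneg K) (by linarith)) _)
      (Nat.cast_nonneg _)
  have hcontr : ContractingWith ⟨_, hKb⟩ (next^[N]) :=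
    ⟨hN, LipschitzWith.of_dist_le_mul fun γ₁ γ₂ => key' N γ₁ γ₂⟩
  -- fixed point
  obtain ⟨γ, hγfix⟩ : ∃ γ : C(Icc a b, E), next γ = γ :=
    ⟨_, hcontr.isFixedPt_fixedPoint_iterate⟩
  refine ⟨fun t => γ (proj t), ?_, ?_⟩
  · show γ (proj t₀) = x₀
    have : γ (proj t₀) = next γ (proj t₀) := by rw [hγfix]
    rw [this, next_apply, hproj_mem t₀ ht₀]
    simp
  · intro t ht
    have heq : ∀ s ∈ Icc a b, γ (proj s) = x₀ + ∫ τ in t₀..s, vC γ τ := by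
      intro s hs
      have : γ (proj s) = next γ (proj s) := by rw [hγfix]
      rw [this, next_apply, hproj_mem s hs]
    haveI : Fact (t ∈ Icc a b) := ⟨ht⟩
    have hD : HasDerivWithinAt (fun s => x₀ + ∫ τ in t₀..s, vC γ τ) (vC γ t) (Icc a b) t := by
      refine HasDerivWithinAt.const_add _ ?_
      exact intervalIntegral.integral_hasDerivWithinAt_right (hvC_int γ _ _)
        ((hvC_cont γ).stronglyMeasurableAtFilter _ _)
        (hvC_cont γ).continuousWithinAt
    have hD' : HasDerivWithinAt (fun s => γ (proj s)) (vC γ t) (Icc a b) t :=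
      hD.congr heq (heq t ht)
    have hvt : vC γ t = v t (γ (proj t)) := rfl
    rw [hvt] at hD'
    exact hD'

end GlobalPicard

/-- Analytic core of the differential ghost rule (dG): a globally Lipschitz
ghost ODE admits a solution on the whole interval `[0,T]` where the original
solution `γ` exists. -/
theorem dG_exists {n m : ℕ}
    (e : EuclideanSpace ℝ (Fin n) → EuclideanSpace ℝ (Fin n))
    (γ : ℝ → EuclideanSpace ℝ (Fin n)) (T : ℝ) (hT : 0 ≤ T)
    (hγ : ∀ t ∈ Set.Icc (0:ℝ) T, HasDerivAt γ (e (γ t)) t)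
    (f : EuclideanSpace ℝ (Fin n) × EuclideanSpace ℝ (Fin m) →
      EuclideanSpace ℝ (Fin m))
    (K : NNReal)
    (hlip : ∀ t ∈ Set.Icc (0:ℝ) T, LipschitzWith K (fun y => f (γ t, y)))
    (hcont : Continuous (fun p : ℝ × EuclideanSpace ℝ (Fin m) => f (γ p.1, p.2))) :
    ∀ r : EuclideanSpace ℝ (Fin m), ∃ ψ : ℝ → EuclideanSpace ℝ (Fin m),
      ψ 0 = r ∧ ∀ t ∈ Set.Icc (0:ℝ) T, HasDerivAt ψ (f (γ t, ψ t)) t := by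
  intro r
  -- clamp time to `[0, T]` to obtain a field defined on all of `ℝ`
  set v : ℝ → EuclideanSpace ℝ (Fin m) → EuclideanSpace ℝ (Fin m) :=
    fun t y => f (γ ((Set.projIcc 0 T hT t : ℝ)), y) with hvdef
  have hlipv : ∀ t, LipschitzWith K (v t) := fun t =>
    hlip _ (Set.projIcc 0 T hT t).2
  have hcv : Continuous fun p : ℝ × EuclideanSpace ℝ (Fin m) => v p.1 p.2 := by
    have : Continuous fun p : ℝ × EuclideanSpace ℝ (Fin m) =>
        (((Set.projIcc 0 T hT p.1 : ℝ)), p.2) :=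
      (continuous_subtype_val.comp (continuous_projIcc.comp continuous_fst)).prodMk
        continuous_snd
    exact hcont.comp this
  have hab : (-1 : ℝ) ≤ T + 1 := by linarith
  have ht₀ : (0 : ℝ) ∈ Set.Icc (-1 : ℝ) (T + 1) := by constructor <;> linarith
  obtain ⟨ψ, hψ0, hψ⟩ := global_picard hab ht₀ v K hlipv hcv r
  refine ⟨ψ, hψ0, fun t ht => ?_⟩
  have htmem : t ∈ Set.Icc (-1 : ℝ) (T + 1) := ⟨by linarith [ht.1], by linarith [ht.2]⟩
  have hD : HasDerivAt ψ (v t (ψ t)) t :=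
    (hψ t htmem).hasDerivAt (Icc_mem_nhds (by linarith [ht.1]) (by linarith [ht.2]))
  have : v t (ψ t) = f (γ t, ψ t) := by
    rw [hvdef]
    simp [Set.projIcc_of_mem hT ht]
  rwa [this] at hD
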